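/- For all positive natural numbers n, r and every real number w, we have (1/n^r) · ∑_{k₁=1}^{n} ⋯ ∑_{k_r=1}^{n} gcd(n, k₁⋯k_r)^w = ∏_{p prime, p ∣ n} [ (1/p^{r·ord_p(n)}) · ∑_{k₁=1}^{p^{ord_p(n)}} ⋯ ∑_{k_r=1}^{p^{ord_p(n)}} gcd(p^{ord_p(n)}, k₁⋯k_r)^w ], where powers with real exponent w are real powers (rpow) of positive real bases and the product ranges over the distinct prime divisors of n. -/

import Mathlib

open Finset

lemma gcd_mod_right (n a : ℕ) : Nat.gcd n (a % n) = Nat.gcd n a := by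
  rw [Nat.gcd_comm n (a % n), ← Nat.gcd_rec]

lemma sum_icc_eq_sum_zmod (n : ℕ) [NeZero n] (r : ℕ) (f : ℕ → ℝ) :
    ∑ k ∈ Fintype.piFinset (fun _ : Fin r => Finset.Icc 1 n), f (Nat.gcd n (∏ i, k i))
      = ∑ z : Fin r → ZMod n, f (Nat.gcd n (∏ i, z i).val) := by
  have hn : 0 < n := Nat.pos_of_ne_zero (NeZero.ne n)
  refine Finset.sum_nbij' (fun k => fun i => ((k i : ℕ) : ZMod n))
    (fun z => fun i => if (z i).val = 0 then n else (z i).val) ?_ ?_ ?_ ?_ ?_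
  · intro k _; exact Finset.mem_univ _
  · intro z _
    rw [Fintype.mem_piFinset]
    intro i
    rw [Finset.mem_Icc]
    by_cases h : (z i).val = 0
    · rw [if_pos h]; exact ⟨hn, le_rfl⟩
    · rw [if_neg h]
      exact ⟨Nat.one_le_iff_ne_zero.mpr h, ((z i).val_lt).le⟩
  · intro k hk
    rw [Fintype.mem_piFinset] at hk
    funext i
    have h1 : 1 ≤ k i := (Finset.mem_Icc.mp (hk i)).1
    have h2 : k i ≤ n := (Finset.mem_Icc.mp (hk i)).2
    simp only [ZMod.val_natCast]
    rcases eq_or_lt_of_le h2 with h | h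
    · simp [h, Nat.mod_self]
    · rw [Nat.mod_eq_of_lt h, if_neg (by omega)]
  · intro z _
    funext i
    by_cases h : (z i).val = 0
    · simp only [h, if_pos rfl]
      rw [ZMod.natCast_self]
      exact ((ZMod.val_eq_zero _).mp h).symm
    · simp only [h, if_neg h]
      exact ZMod.natCast_rightInverse (z i)
  · intro k hk
    rw [← Nat.cast_prod, ZMod.val_natCast, gcd_mod_right]

lemma crt_pair {m n : ℕ} [NeZero m] [NeZero n] (h : m.Coprime n) (X : ZMod (m * n)) :
    (ZMod.chineseRemainder h) X = ((X.val : ZMod m), (X.val : ZMod n)) := by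
  haveI : NeZero (m * n) := ⟨Nat.mul_ne_zero (NeZero.ne m) (NeZero.ne n)⟩
  have hx : ((X.val : ℕ) : ZMod (m * n)) = X := ZMod.natCast_rightInverse X
  rw [← hx, map_natCast]
  ext <;> simp

lemma zmod_sum_mul (m n : ℕ) [NeZero m] [NeZero n] (h : m.Coprime n) (r : ℕ) (w : ℝ) :
    ∑ z : Fin r → ZMod (m * n), ((Nat.gcd (m * n) (∏ i, z i).val : ℝ)) ^ w
      = (∑ x : Fin r → ZMod m, ((Nat.gcd m (∏ i, x i).val : ℝ)) ^ w)
        * (∑ y : Fin r → ZMod n, ((Nat.gcd n (∏ i, y i).val : ℝ)) ^ w) := by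
  haveI : NeZero (m * n) := ⟨Nat.mul_ne_zero (NeZero.ne m) (NeZero.ne n)⟩
  set e := ZMod.chineseRemainder h with he
  set E : (Fin r → ZMod (m * n)) ≃ (Fin r → ZMod m) × (Fin r → ZMod n) :=
    (Equiv.piCongrRight fun _ => e.toEquiv).trans
      (Equiv.arrowProdEquivProdArrow _ _ _) with hE
  rw [Fintype.sum_equiv E _
    (fun p => ((Nat.gcd m (∏ i, (p.1 i)).val : ℝ)) ^ w * ((Nat.gcd n (∏ i, (p.2 i)).val : ℝ)) ^ w)]
  · rw [Fintype.sum_prod_type]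
    exact (Finset.sum_mul_sum Finset.univ Finset.univ
      (fun x : Fin r → ZMod m => ((Nat.gcd m (∏ i, x i).val : ℝ)) ^ w)
      (fun y : Fin r → ZMod n => ((Nat.gcd n (∏ i, y i).val : ℝ)) ^ w)).symm
  · intro z
    have hprod : e (∏ i, z i) = ∏ i, e (z i) := map_prod e _ _
    have h1 : (∏ i, e (z i)).1 = ∏ i, (e (z i)).1 := by
      exact Prod.fst_prod
    have h2 : (∏ i, e (z i)).2 = ∏ i, (e (z i)).2 := Prod.snd_prod
    have key : Nat.gcd (m * n) (∏ i, z i).val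
        = Nat.gcd m (∏ i, (E z).1 i).val * Nat.gcd n (∏ i, (E z).2 i).val := by
      have hEz1 : ∀ i, (E z).1 i = (e (z i)).1 := fun i => rfl
      have hEz2 : ∀ i, (E z).2 i = (e (z i)).2 := fun i => rfl
      have e1 : (∏ i, (E z).1 i) = (((∏ i, z i).val : ℕ) : ZMod m) := by
        simp only [hEz1]; rw [← h1, ← hprod, crt_pair h]
      have e2 : (∏ i, (E z).2 i) = (((∏ i, z i).val : ℕ) : ZMod n) := by
        simp only [hEz2]; rw [← h2, ← hprod, crt_pair h]
      rw [e1, e2, ZMod.val_natCast, ZMod.val_natCast, gcd_mod_right, gcd_mod_right,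
        Nat.gcd_comm (m*n), Nat.gcd_comm m, Nat.gcd_comm n]
      exact Nat.Coprime.gcd_mul _ h
    rw [key, Nat.cast_mul, Real.mul_rpow (Nat.cast_nonneg _) (Nat.cast_nonneg _)]

noncomputable def Gfun (r : ℕ) (w : ℝ) (n : ℕ) : ℝ :=
  (1 / (n : ℝ) ^ r) *
    ∑ k ∈ Fintype.piFinset (fun _ : Fin r => Finset.Icc 1 n),
      (Nat.gcd n (∏ i, k i) : ℝ) ^ w

lemma Gfun_one (r : ℕ) (w : ℝ) : Gfun r w 1 = 1 := by
  unfold Gfun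
  have : ∀ k ∈ Fintype.piFinset (fun _ : Fin r => Finset.Icc 1 1),
      ((Nat.gcd 1 (∏ i, k i) : ℕ) : ℝ) ^ w = 1 := by
    intro k _
    rw [Nat.gcd_one_left]
    simp [Real.one_rpow]
  rw [Finset.sum_congr rfl this, Finset.sum_const, nsmul_eq_mul]
  simp

lemma Gfun_mult (r : ℕ) (hr : 0 < r) (w : ℝ) (m n : ℕ) (hm : 0 < m) (hn : 0 < n)
    (h : m.Coprime n) : Gfun r w (m * n) = Gfun r w m * Gfun r w n := by
  haveI : NeZero m := ⟨hm.ne'⟩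
  haveI : NeZero n := ⟨hn.ne'⟩
  haveI : NeZero (m * n) := ⟨Nat.mul_ne_zero hm.ne' hn.ne'⟩
  unfold Gfun
  rw [sum_icc_eq_sum_zmod (m * n) r (fun t => ((t : ℕ) : ℝ) ^ w),
    sum_icc_eq_sum_zmod m r (fun t => ((t : ℕ) : ℝ) ^ w),
    sum_icc_eq_sum_zmod n r (fun t => ((t : ℕ) : ℝ) ^ w),
    zmod_sum_mul m n h r w]
  have : ((m * n : ℕ) : ℝ) ^ r = (m : ℝ) ^ r * (n : ℝ) ^ r := by push_cast; ring
  rw [this]; ring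

theorem stmt_15 (n r : ℕ) (hn : 0 < n) (hr : 0 < r) (w : ℝ) :
    (1 / (n : ℝ) ^ r) *
        ∑ k ∈ Fintype.piFinset (fun _ : Fin r => Finset.Icc 1 n),
          (Nat.gcd n (∏ i, k i) : ℝ) ^ w =
      ∏ p ∈ n.primeFactors,
        (1 / (p : ℝ) ^ (r * n.factorization p)) *
          ∑ k ∈ Fintype.piFinset (fun _ : Fin r => Finset.Icc 1 (p ^ n.factorization p)),
            (Nat.gcd (p ^ n.factorization p) (∏ i, k i) : ℝ) ^ w := by
  have hmult : ∀ x y : ℕ, Nat.Coprime x y → Gfun r w (x * y) = Gfun r w x * Gfun r w y := by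
    intro x y hxy
    rcases Nat.eq_zero_or_pos x with rfl | hx
    · rw [Nat.coprime_zero_left] at hxy; subst hxy; simp [Gfun_one]
    rcases Nat.eq_zero_or_pos y with rfl | hy
    · rw [Nat.coprime_zero_right] at hxy; subst hxy; simp [Gfun_one]
    exact Gfun_mult r hr w x y hx hy hxy
  have key := Nat.multiplicative_factorization (Gfun r w) hmult (Gfun_one r w) hn.ne'
  show Gfun r w n = _
  rw [key, Nat.prod_factorization_eq_prod_primeFactors]
  refine Finset.prod_congr rfl fun p hp => ?_
  unfold Gfun
  rw [Nat.cast_pow, ← pow_mul, mul_comm (n.factorization p) r]
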